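/- Let Ω be finite, g : Ω^n → [0,1] monotone increasing in each block, and for each ground element (i,a) of a finite set G = N × A let F_{i,a} ∈ Δ(Ω). For S ⊆ G define the per-agent mixture F_{i,S} as the distribution of the sum (over elements (i,a) ∈ S) of independent samples shifted appropriately, and define f(S) = E[g(ω)] where ω_i ~ F_{i,S} independently. If g is DR-submodular, then f is a monotone submodular set function: for all S ⊆ S' ⊆ G and (i,a) ∉ S', f(S ∪ {(i,a)}) − f(S) ≥ f(S' ∪ {(i,a)}) − f(S'). -/

import Mathlib

open Classical in
/-- The expected reward `f(S) = E[g(ω)]`, where the `i`-th block of `ω` is the sum of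
independent draws from `F i a` over all `a` with `(i,a) ∈ S` (each draw supported on
`Ω`, empty sum `= 0`), and draws are independent across ground elements. -/
noncomputable def expReward {N A : Type*} [Fintype N] [Fintype A]
    [DecidableEq N] [DecidableEq A] {q : ℕ}
    (Ω : Finset (Fin q → ℝ)) (F : N → A → (Fin q → ℝ) → ℝ)
    (g : (N → Fin q → ℝ) → ℝ) (S : Finset (N × A)) : ℝ :=
  ∑ φ ∈ S.pi (fun _ => Ω),
    (∏ p ∈ S.attach, F p.1.1 p.1.2 (φ p.1 p.2)) *
      g (fun i j => ∑ a : A, if h : (i, a) ∈ S then φ (i, a) h j else 0)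

/-- Generic: sum over `(insert a s).pi t` splits into a sum over the new value and
the old pi set, via `Pi.cons`. -/
lemma sum_pi_insert' {α : Type*} {β : α → Type*} [DecidableEq α] [∀ a, DecidableEq (β a)]
    {M : Type*} [AddCommMonoid M]
    {s : Finset α} {t : ∀ a, Finset (β a)} {a : α} (ha : a ∉ s)
    (f : (∀ i ∈ insert a s, β i) → M) :
    ∑ φ ∈ (insert a s).pi t, f φ
      = ∑ b ∈ t a, ∑ ψ ∈ s.pi t, f (Finset.Pi.cons s a b ψ) := by
  have h₁ : ∀ x ∈ t a, ∀ y ∈ t a, x ≠ y →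
      Disjoint ((s.pi t).image (Finset.Pi.cons s a x))
        ((s.pi t).image (Finset.Pi.cons s a y)) := by
    intro x _ y _ h
    simp only [Finset.disjoint_iff_ne, Finset.mem_image]
    rintro _ ⟨p₂, _, eq₂⟩ _ ⟨p₃, _, eq₃⟩ eq
    have : Finset.Pi.cons s a x p₂ a (Finset.mem_insert_self _ _)
        = Finset.Pi.cons s a y p₃ a (Finset.mem_insert_self _ _) := by rw [eq₂, eq₃, eq]
    rw [Finset.Pi.cons_same, Finset.Pi.cons_same] at this
    exact h this
  rw [Finset.pi_insert ha, Finset.sum_biUnion h₁]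
  refine Finset.sum_congr rfl fun b _ => ?_
  exact Finset.sum_image fun p₁ _ p₂ _ eq => Finset.Pi.cons_injective ha eq

section Aux

variable {N A : Type*} [Fintype N] [Fintype A] [DecidableEq N] [DecidableEq A] {q : ℕ}

open Classical in
/-- The aggregate vector built from a pi-assignment. -/
noncomputable def wv (S : Finset (N × A)) (φ : ∀ p ∈ S, Fin q → ℝ) : N → Fin q → ℝ :=
  fun i j => ∑ a : A, if h : (i, a) ∈ S then φ (i, a) h j else 0

/-- Single-block vector: value `b` in block `p.1`, zero elsewhere. -/
noncomputable def eblk (p : N × A) (b : Fin q → ℝ) : N → Fin q → ℝ :=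
  fun i j => if i = p.1 then b j else 0

open Classical in
/-- Generalized expected value of `h` against the product/convolution weights. -/
noncomputable def Ew (Ω : Finset (Fin q → ℝ)) (F : N → A → (Fin q → ℝ) → ℝ)
    (S : Finset (N × A)) (h : (N → Fin q → ℝ) → ℝ) : ℝ :=
  ∑ φ ∈ S.pi (fun _ => Ω),
    (∏ p ∈ S.attach, F p.1.1 p.1.2 (φ p.1 p.2)) * h (wv S φ)

variable {Ω : Finset (Fin q → ℝ)} {F : N → A → (Fin q → ℝ) → ℝ}

lemma eblk_nonneg {p : N × A} {b : Fin q → ℝ} (hb : 0 ≤ b) : 0 ≤ eblk p b := by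
  rw [Pi.le_def]; intro i; rw [Pi.le_def]; intro j
  unfold eblk
  split
  · exact hb j
  · exact le_rfl

lemma wv_nonneg (hΩnn : ∀ x ∈ Ω, 0 ≤ x) {S : Finset (N × A)}
    {φ : ∀ p ∈ S, Fin q → ℝ} (hφ : φ ∈ S.pi (fun _ => Ω)) : 0 ≤ wv S φ := by
  rw [Pi.le_def]; intro i; rw [Pi.le_def]; intro j
  refine Finset.sum_nonneg fun a _ => ?_
  split
  · next h => exact hΩnn _ (Finset.mem_pi.mp hφ _ h) j
  · exact le_rfl

lemma wv_empty (φ : ∀ p ∈ (∅ : Finset (N × A)), Fin q → ℝ) : wv ∅ φ = 0 := by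
  funext i j
  unfold wv
  simp

lemma wv_cons {p : N × A} {S : Finset (N × A)} (hp : p ∉ S)
    (b : Fin q → ℝ) (φ : ∀ r ∈ S, Fin q → ℝ) :
    wv (insert p S) (Finset.Pi.cons S p b φ) = wv S φ + eblk p b := by
  funext i j
  show (∑ a : A, if h : (i, a) ∈ insert p S then Finset.Pi.cons S p b φ (i, a) h j else 0)
      = (∑ a : A, if h : (i, a) ∈ S then φ (i, a) h j else 0) + (if i = p.1 then b j else 0)
  have key : ∀ a : A,
      (if h : (i, a) ∈ insert p S then Finset.Pi.cons S p b φ (i, a) h j else 0)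
        = (if h : (i, a) ∈ S then φ (i, a) h j else 0) + (if (i, a) = p then b j else 0) := by
    intro a
    by_cases hip : (i, a) = p
    · subst hip
      simp [Finset.Pi.cons_same, hp]
    · rw [if_neg hip, add_zero]
      by_cases hS : (i, a) ∈ S
      · rw [dif_pos hS, dif_pos (Finset.mem_insert_of_mem hS), Finset.Pi.cons_ne (Ne.symm hip)]
      · rw [dif_neg hS, dif_neg (by simp [Finset.mem_insert, hip, hS])]
  rw [Finset.sum_congr rfl fun a _ => key a, Finset.sum_add_distrib]
  congr 1
  simp only [Prod.ext_iff]
  by_cases hi : i = p.1 <;> simp [hi]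

lemma weight_cons {p : N × A} {S : Finset (N × A)} (hp : p ∉ S)
    (b : Fin q → ℝ) (φ : ∀ r ∈ S, Fin q → ℝ) :
    (∏ r ∈ (insert p S).attach, F r.1.1 r.1.2 (Finset.Pi.cons S p b φ r.1 r.2))
      = F p.1 p.2 b * ∏ r ∈ S.attach, F r.1.1 r.1.2 (φ r.1 r.2) := by
  rw [Finset.attach_insert, Finset.prod_insert, Finset.prod_image]
  · simp only [Finset.Pi.cons_same]
    congr 1
    refine Finset.prod_congr rfl fun x _ => ?_
    congr 1
    exact Finset.Pi.cons_ne (by rintro rfl; exact hp x.2)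
  · exact fun _ _ _ _ => Subtype.eq ∘ Subtype.mk.inj
  · simpa only [Finset.mem_image, Finset.mem_attach, Subtype.mk.injEq, true_and,
      Subtype.exists, exists_prop, exists_eq_right] using hp

lemma Ew_empty (h : (N → Fin q → ℝ) → ℝ) : Ew Ω F ∅ h = h 0 := by
  unfold Ew
  rw [Finset.pi_empty, Finset.sum_singleton]
  rw [wv_empty]
  simp

lemma Ew_insert {p : N × A} {S : Finset (N × A)} (hp : p ∉ S)
    (h : (N → Fin q → ℝ) → ℝ) :
    Ew Ω F (insert p S) h
      = ∑ b ∈ Ω, F p.1 p.2 b * Ew Ω F S (fun ω => h (ω + eblk p b)) := by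
  unfold Ew
  rw [sum_pi_insert' hp]
  refine Finset.sum_congr rfl fun b _ => ?_
  rw [Finset.mul_sum]
  refine Finset.sum_congr rfl fun ψ _ => ?_
  rw [weight_cons hp, wv_cons hp]
  ring

lemma Ew_const (hF1 : ∀ i a, ∑ x ∈ Ω, F i a x = 1) (S : Finset (N × A)) (c : ℝ) :
    Ew Ω F S (fun _ => c) = c := by
  induction S using Finset.induction_on with
  | empty => exact Ew_empty _
  | insert _ _ hp ih =>
    rw [Ew_insert hp]
    simp only [ih]
    rw [← Finset.sum_mul, hF1, one_mul]

lemma Ew_le (hΩnn : ∀ x ∈ Ω, 0 ≤ x) (hF0 : ∀ i a x, 0 ≤ F i a x)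
    {S : Finset (N × A)} {h₁ h₂ : (N → Fin q → ℝ) → ℝ}
    (hh : ∀ ω : N → Fin q → ℝ, 0 ≤ ω → h₁ ω ≤ h₂ ω) :
    Ew Ω F S h₁ ≤ Ew Ω F S h₂ := by
  refine Finset.sum_le_sum fun φ hφ => ?_
  exact mul_le_mul_of_nonneg_left (hh _ (wv_nonneg hΩnn hφ))
    (Finset.prod_nonneg fun _ _ => hF0 _ _ _)

lemma Ew_sub (S : Finset (N × A)) (h₁ h₂ : (N → Fin q → ℝ) → ℝ) :
    Ew Ω F S (fun ω => h₁ ω - h₂ ω) = Ew Ω F S h₁ - Ew Ω F S h₂ := by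
  unfold Ew
  rw [← Finset.sum_sub_distrib]
  exact Finset.sum_congr rfl fun φ _ => by ring

lemma Ew_union {S T : Finset (N × A)} (hST : Disjoint S T) (h : (N → Fin q → ℝ) → ℝ) :
    Ew Ω F (S ∪ T) h = Ew Ω F T (fun v => Ew Ω F S (fun ω => h (ω + v))) := by
  revert hST
  induction T using Finset.induction_on generalizing h with
  | empty =>
    intro _
    rw [Finset.union_empty, Ew_empty]
    simp
  | insert _ _ hp ih =>
    rename_i p T'
    intro hST
    have hpS : p ∉ S := fun hc => (Finset.disjoint_left.mp hST hc) (Finset.mem_insert_self _ _)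
    have hST' : Disjoint S T' :=
      hST.mono_right (Finset.subset_insert _ _)
    have hpu : p ∉ S ∪ T' := by
      simp only [Finset.mem_union, not_or]
      exact ⟨hpS, hp⟩
    rw [Finset.union_insert, Ew_insert hpu, Ew_insert hp]
    refine Finset.sum_congr rfl fun b _ => ?_
    rw [ih _ hST']
    simp only [add_assoc]

end Aux

lemma expReward_eq_Ew {N A : Type*} [Fintype N] [Fintype A]
    [DecidableEq N] [DecidableEq A] {q : ℕ}
    (Ω : Finset (Fin q → ℝ)) (F : N → A → (Fin q → ℝ) → ℝ)
    (g : (N → Fin q → ℝ) → ℝ) (S : Finset (N × A)) :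
    expReward Ω F g S = Ew Ω F S g := rfl

/-- If `g` is monotone increasing, `[0,1]`-valued on nonnegative vectors, and
DR-submodular, then the expected reward `S ↦ expReward Ω F g S` is a monotone
submodular set function on subsets of `N × A`. -/
theorem stmt11 {N A : Type*} [Fintype N] [Fintype A] [DecidableEq N] [DecidableEq A]
    {q : ℕ} (Ω : Finset (Fin q → ℝ))
    (hΩ0 : (0 : Fin q → ℝ) ∈ Ω) (hΩnn : ∀ x ∈ Ω, 0 ≤ x)
    (F : N → A → (Fin q → ℝ) → ℝ)
    (hF0 : ∀ i a x, 0 ≤ F i a x) (hF1 : ∀ i a, ∑ x ∈ Ω, F i a x = 1)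
    (g : (N → Fin q → ℝ) → ℝ)
    (hg01 : ∀ x : N → Fin q → ℝ, 0 ≤ x → g x ∈ Set.Icc (0:ℝ) 1)
    (hmono : ∀ x y : N → Fin q → ℝ, 0 ≤ x → x ≤ y → g x ≤ g y)
    (hDR : ∀ x y z : N → Fin q → ℝ, 0 ≤ x → x ≤ y → 0 ≤ z →
      g (x + z) - g x ≥ g (y + z) - g y) :
    (∀ S S' : Finset (N × A), S ⊆ S' → expReward Ω F g S ≤ expReward Ω F g S') ∧
    (∀ S S' : Finset (N × A), ∀ p : N × A, S ⊆ S' → p ∉ S' →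
      expReward Ω F g (insert p S') - expReward Ω F g S' ≤
        expReward Ω F g (insert p S) - expReward Ω F g S) := by
  constructor
  · intro S S' hSS'
    rw [expReward_eq_Ew, expReward_eq_Ew]
    have hdisj : Disjoint S (S' \ S) := Finset.disjoint_sdiff
    have hU : S ∪ (S' \ S) = S' := Finset.union_sdiff_of_subset hSS'
    calc Ew Ω F S g = Ew Ω F (S' \ S) (fun _ => Ew Ω F S g) := (Ew_const hF1 _ _).symm
      _ ≤ Ew Ω F (S' \ S) (fun v => Ew Ω F S (fun ω => g (ω + v))) := by
          refine Ew_le hΩnn hF0 fun v hv => ?_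
          refine Ew_le hΩnn hF0 fun ω hω => ?_
          exact hmono _ _ hω (le_add_of_nonneg_right hv)
      _ = Ew Ω F (S ∪ (S' \ S)) g := (Ew_union hdisj g).symm
      _ = Ew Ω F S' g := by rw [hU]
  · intro S S' p hSS' hpS'
    have hpS : p ∉ S := fun hc => hpS' (hSS' hc)
    simp only [expReward_eq_Ew]
    have key : ∀ T : Finset (N × A), p ∉ T →
        Ew Ω F (insert p T) g - Ew Ω F T g
          = ∑ b ∈ Ω, F p.1 p.2 b *
              Ew Ω F T (fun ω => g (ω + eblk p b) - g ω) := by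
      intro T hpT
      rw [Ew_insert hpT]
      have : Ew Ω F T g = ∑ b ∈ Ω, F p.1 p.2 b * Ew Ω F T g := by
        rw [← Finset.sum_mul, hF1, one_mul]
      rw [this, ← Finset.sum_sub_distrib]
      refine Finset.sum_congr rfl fun b _ => ?_
      rw [Ew_sub]
      ring
    rw [key S hpS, key S' hpS']
    refine Finset.sum_le_sum fun b hb => ?_
    refine mul_le_mul_of_nonneg_left ?_ (hF0 _ _ _)
    have hbnn : 0 ≤ eblk p b := eblk_nonneg (hΩnn b hb)
    have hdisj : Disjoint S (S' \ S) := Finset.disjoint_sdiff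
    have hU : S ∪ (S' \ S) = S' := Finset.union_sdiff_of_subset hSS'
    calc Ew Ω F S' (fun ω => g (ω + eblk p b) - g ω)
        = Ew Ω F (S ∪ (S' \ S)) (fun ω => g (ω + eblk p b) - g ω) := by rw [hU]
      _ = Ew Ω F (S' \ S) (fun v => Ew Ω F S (fun ω => g (ω + v + eblk p b) - g (ω + v))) := by
          rw [Ew_union hdisj]
      _ ≤ Ew Ω F (S' \ S) (fun _ => Ew Ω F S (fun ω => g (ω + eblk p b) - g ω)) := by
          refine Ew_le hΩnn hF0 fun v hv => ?_
          refine Ew_le hΩnn hF0 fun ω hω => ?_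
          exact hDR ω (ω + v) (eblk p b) hω (le_add_of_nonneg_right hv) hbnn
      _ = Ew Ω F S (fun ω => g (ω + eblk p b) - g ω) := Ew_const hF1 _ _
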